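/- Let K be a field of characteristic 0 containing all p-power roots of unity, let M be a K-vector space with commuting linear automorphisms γ₁,…,γ_d, and suppose each γᵢ admits compatible p-power roots γᵢ^{1/pᴺ} acting on a module M_N ⊇ M. If M_N decomposes as a direct sum of generalized eigenspaces M_N^{(k₁,…,k_d)} on which γᵢ^{1/pᴺ} − ζ_{pᴺ}^{kᵢ} acts nilpotently, and each eigenspace M_N^{(k₁,…,k_d)} equals u^{(k₁,…,k_d)} · M_N^{(0,…,0)} for some unit u, then the natural map M_N^{(0,…,0)} ⊗_{A₀} A_N → M_N is an isomorphism, where A_N is the group algebra of the characters appearing. -/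

import Mathlib

open scoped TensorProduct DirectSum


/-- if a module `M` over `A` decomposes, as an `A₀`-module, as the direct
sum of the translates `u_k · M₀` of its unipotent part `M₀` by units `u_k` (indexed by
the characters `k = (k₁,…,k_d) ∈ (ℤ/pᴺ)^d`, with `u_0 = 1`), and `A` likewise
decomposes as `⊕_k u_k · A₀`, then the natural map `M₀ ⊗_{A₀} A → M`, `m ⊗ a ↦ a • m`,
is an isomorphism. -/
theorem eigenspace_decomposition_tensor_iso
    (p N d : ℕ) [Fact p.Prime]
    {A₀ : Type*} [CommRing A₀]
    {A : Type*} [CommRing A] [Algebra A₀ A]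
    {M : Type*} [AddCommGroup M] [Module A M] [Module A₀ M] [IsScalarTower A₀ A M]
    (u : (Fin d → ZMod (p ^ N)) → Aˣ) (hu0 : u 0 = 1)
    (M₀ : Submodule A₀ M)
    -- `M = ⊕_k u_k · M₀` as `A₀`-modules
    (hM : DirectSum.IsInternal (fun k : Fin d → ZMod (p ^ N) =>
      Submodule.map ((LinearMap.lsmul A M ((u k : A))).restrictScalars A₀) M₀))
    -- `A = ⊕_k u_k · A₀` as `A₀`-modules
    (hA : DirectSum.IsInternal (fun k : Fin d → ZMod (p ^ N) =>
      Submodule.map ((LinearMap.lsmul A A ((u k : A))).restrictScalars A₀)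
        (1 : Submodule A₀ A))) :
    Function.Bijective
      (TensorProduct.lift
        (LinearMap.mk₂ A₀ (fun (m : M₀) (a : A) => a • (m : M))
          (fun m m' a => by simp [smul_add])
          (fun r m a => (smul_comm r a (m : M)).symm)
          (fun m a a' => by simp [add_smul])
          (fun r m a => smul_assoc r a (m : M)))) := by
  classical
  set NM : (Fin d → ZMod (p ^ N)) → Submodule A₀ M := fun k =>
    Submodule.map ((LinearMap.lsmul A M ((u k : A))).restrictScalars A₀) M₀ with hNM
  set φ : (↥M₀) ⊗[A₀] A →ₗ[A₀] M :=
    (TensorProduct.lift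
        (LinearMap.mk₂ A₀ (fun (m : M₀) (a : A) => a • (m : M))
          (fun m m' a => by simp [smul_add])
          (fun r m a => (smul_comm r a (m : M)).symm)
          (fun m a a' => by simp [add_smul])
          (fun r m a => smul_assoc r a (m : M)))) with hφ
  have hφ_tmul : ∀ (m : ↥M₀) (a : A), φ ((m : ↥M₀) ⊗ₜ[A₀] a) = a • (m : M) := fun m a => rfl
  -- injectivity of `u k • ·` on `M`
  have hinj : ∀ k : Fin d → ZMod (p ^ N),
      Function.Injective ((LinearMap.lsmul A M ((u k : A))).restrictScalars A₀) := by
    intro k x y h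
    have h' : (u k : A) • x = (u k : A) • y := h
    have := congrArg (fun z => (((u k)⁻¹ : Aˣ) : A) • z) h'
    simpa [smul_smul] using this
  -- the equivalences `M₀ ≃ u_k • M₀`
  set e := fun k : Fin d → ZMod (p ^ N) =>
    Submodule.equivMapOfInjective ((LinearMap.lsmul A M ((u k : A))).restrictScalars A₀)
      (hinj k) M₀ with he
  -- the map `⊕_k (u_k • M₀) → M₀ ⊗ A`
  set g : (⨁ k : Fin d → ZMod (p ^ N), NM k) →ₗ[A₀] (↥M₀) ⊗[A₀] A :=
    DirectSum.toModule A₀ _ _ (fun k =>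
      ((TensorProduct.mk A₀ (↥M₀) A).flip ((u k : A))) ∘ₗ ((e k).symm : NM k →ₗ[A₀] ↥M₀))
    with hg
  set eM : (⨁ k : Fin d → ZMod (p ^ N), NM k) ≃ₗ[A₀] M :=
    LinearEquiv.ofBijective (DirectSum.coeLinearMap NM) hM with heM
  set ψ : M →ₗ[A₀] (↥M₀) ⊗[A₀] A := g ∘ₗ (eM.symm : M →ₗ[A₀] _) with hψ
  -- key computation: `ψ (u_k • m) = m ⊗ u_k` for `m ∈ M₀`
  have hψ_smul : ∀ (k : Fin d → ZMod (p ^ N)) (m : ↥M₀),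
      ψ ((u k : A) • (m : M)) = (m : ↥M₀) ⊗ₜ[A₀] (u k : A) := by
    intro k m
    have hmem : (u k : A) • (m : M) ∈ NM k := ⟨m, m.2, rfl⟩
    have h1 : eM.symm ((u k : A) • (m : M)) =
        DirectSum.lof A₀ _ (fun k => NM k) k ⟨(u k : A) • (m : M), hmem⟩ := by
      rw [LinearEquiv.symm_apply_eq, heM]
      show _ = DirectSum.coeLinearMap NM _
      rw [DirectSum.lof_eq_of, DirectSum.coeLinearMap_of]
    have h2 : (e k).symm ⟨(u k : A) • (m : M), hmem⟩ = m := by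
      apply (e k).injective
      rw [LinearEquiv.apply_symm_apply]
      ext
      simp [he, Submodule.coe_equivMapOfInjective_apply]
    calc ψ ((u k : A) • (m : M))
        = g (DirectSum.lof A₀ _ (fun k => NM k) k ⟨(u k : A) • (m : M), hmem⟩) := by
          rw [hψ]; simp only [LinearMap.coe_comp, Function.comp_apply, LinearEquiv.coe_coe, h1]
      _ = (m : ↥M₀) ⊗ₜ[A₀] (u k : A) := by
          rw [hg, DirectSum.toModule_lof]
          simp [h2]
  -- `φ ∘ g = coeLinearMap`
  have hφg : ∀ x : ⨁ k : Fin d → ZMod (p ^ N), NM k,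
      φ (g x) = DirectSum.coeLinearMap NM x := by
    intro x
    have heq : φ ∘ₗ g = DirectSum.coeLinearMap NM := by
      apply DirectSum.linearMap_ext
      intro k
      ext m
      simp only [LinearMap.coe_comp, Function.comp_apply]
      rw [hg, DirectSum.toModule_lof]
      simp only [LinearMap.coe_comp, Function.comp_apply, TensorProduct.mk_apply,
        LinearMap.flip_apply, LinearEquiv.coe_coe]
      rw [hφ_tmul, DirectSum.lof_eq_of, DirectSum.coeLinearMap_of]
      exact Submodule.map_equivMapOfInjective_symm_apply _ (hinj k) M₀ m
    exact LinearMap.congr_fun heq x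
  constructor
  · -- injectivity: `ψ ∘ φ = id`
    have hψφ : ∀ t : (↥M₀) ⊗[A₀] A, ψ (φ t) = t := by
      intro t
      induction t using TensorProduct.induction_on with
      | zero => simp
      | add x y hx hy => simp only [map_add, hx, hy]
      | tmul m a =>
        have ha : a ∈ ⨆ k : Fin d → ZMod (p ^ N), Submodule.map
            ((LinearMap.lsmul A A ((u k : A))).restrictScalars A₀) (1 : Submodule A₀ A) := by
          rw [hA.submodule_iSup_eq_top]; trivial
        refine Submodule.iSup_induction _
          (motive := fun a => ψ (φ ((m : ↥M₀) ⊗ₜ[A₀] a)) = (m : ↥M₀) ⊗ₜ[A₀] a) ha ?_ ?_ ?_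
        · rintro k _ ⟨x, hx, rfl⟩
          obtain ⟨a₀, rfl⟩ : ∃ a₀ : A₀, algebraMap A₀ A a₀ = x := by
            rw [Submodule.one_eq_range] at hx
            exact hx
          show ψ (φ ((m : ↥M₀) ⊗ₜ[A₀] ((u k : A) * algebraMap A₀ A a₀)))
            = (m : ↥M₀) ⊗ₜ[A₀] ((u k : A) * algebraMap A₀ A a₀)
          have h3 : φ ((m : ↥M₀) ⊗ₜ[A₀] ((u k : A) * algebraMap A₀ A a₀))
              = (u k : A) • ((a₀ • m : ↥M₀) : M) := by
            rw [hφ_tmul, mul_smul, algebraMap_smul]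
            simp
          rw [h3, hψ_smul k (a₀ • m), TensorProduct.smul_tmul]
          congr 1
          rw [Algebra.smul_def, mul_comm]
        · simp
        · intro x y hx hy
          rw [TensorProduct.tmul_add, map_add, map_add, hx, hy]
    intro t₁ t₂ h
    have h' : ψ (φ t₁) = ψ (φ t₂) := by rw [h]
    rwa [hψφ, hψφ] at h'
  · -- surjectivity
    intro x
    have hx : x ∈ ⨆ k : Fin d → ZMod (p ^ N), NM k := by
      rw [hM.submodule_iSup_eq_top]; trivial
    refine Submodule.iSup_induction _ (motive := fun x => ∃ t, φ t = x) hx ?_ ?_ ?_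
    · intro k y hy
      refine ⟨g (DirectSum.lof A₀ _ (fun k => NM k) k ⟨y, hy⟩), ?_⟩
      rw [hφg, DirectSum.lof_eq_of, DirectSum.coeLinearMap_of]
    · exact ⟨0, map_zero φ⟩
    · rintro x y ⟨tx, htx⟩ ⟨ty, hty⟩
      exact ⟨tx + ty, by rw [map_add, htx, hty]⟩
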